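/- Let n, s > 0 be integers with n a power of 2, and let ε₀, δ₀ ∈ (0,1]. Then there exist a universe X = [n·s], a base class B ⊆ {±1}^X with |B| = (2n)^s, the reference class F = {±1}^X consisting of all functions X → {±1}, and a (1/√n, ε₀, δ₀, m₀, F, B) agnostic weak learner, for every m₀ ≥ ⌈8·ln(2|B|/δ₀)/ε₀²⌉. -/

import Mathlib

open MeasureTheory Real
open scoped ENNReal NNReal

noncomputable section

namespace Agb

/-- signed value of a boolean label: `true ↦ 1`, `false ↦ -1`. -/
def bval (b : Bool) : ℝ := if b then 1 else -1

variable {X : Type*}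

/-- a hypothesis is binary (±1-valued) -/
def IsBinary (h : X → ℝ) : Prop := ∀ x, h x = 1 ∨ h x = -1

/-- correlation of a hypothesis under a distribution on `X × Bool` -/
def corr [MeasurableSpace X] (D : Measure (X × Bool)) (h : X → ℝ) : ℝ :=
  ∫ p, bval p.2 * h p.1 ∂D

/-- error of a classifier under a distribution on `X × Bool` -/
def err [MeasurableSpace X] (D : Measure (X × Bool)) (h : X → ℝ) : ℝ :=
  (D {p | h p.1 ≠ bval p.2}).toReal

/-- `lam`-margin loss of `g` under a distribution on `X × Bool` -/
def mloss [MeasurableSpace X] (D : Measure (X × Bool)) (lam : ℝ) (g : X → ℝ) : ℝ :=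
  (D {p | bval p.2 * g p.1 ≤ lam}).toReal

/-- the `m`-fold product (i.i.d. sample) measure -/
def iid {α : Type*} [MeasurableSpace α] (D : Measure α) (m : ℕ) :
    Measure (Fin m → α) :=
  Measure.pi fun _ => D

/-- truncated logarithm -/
def Ln (x : ℝ) : ℝ := Real.log (max x (Real.exp 1))

/-- `H` shatters the points `x` -/
def Shatters (H : Set (X → ℝ)) {d : ℕ} (x : Fin d → X) : Prop :=
  ∀ b : Fin d → Bool, ∃ h ∈ H, ∀ i, h (x i) = bval (b i)

/-- the VC dimension of `H` is at most `d` -/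
def VCLe (H : Set (X → ℝ)) (d : ℕ) : Prop :=
  ∀ x : Fin (d + 1) → X, Function.Injective x → ¬ Shatters H x

/-- `H` α-fat-shatters the points `x` with levels `r` -/
def FatShatters (H : Set (X → ℝ)) (α : ℝ) {d : ℕ} (x : Fin d → X) (r : Fin d → ℝ) : Prop :=
  ∀ b : Fin d → Bool, ∃ h ∈ H, ∀ i,
    (b i = true → r i + α ≤ h (x i)) ∧ (b i = false → h (x i) ≤ r i - α)

/-- `d` is the fat-shattering dimension of `H` at level `α` -/
def IsFatDim (H : Set (X → ℝ)) (α : ℝ) (d : ℕ) : Prop :=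
  IsGreatest {k : ℕ | ∃ (x : Fin k → X) (r : Fin k → ℝ), FatShatters H α x r} d

/-- `(γ, ε₀, δ₀, m₀, F, H)` agnostic weak learner -/
def IsAWL [MeasurableSpace X] (γ ε₀ δ₀ : ℝ) (m₀ : ℕ) (F H : Set (X → ℝ))
    (W : List (X × Bool) → X → ℝ) : Prop :=
  (∀ S, W S ∈ H) ∧
  ∀ D : Measure (X × Bool), IsProbabilityMeasure D →
    ENNReal.ofReal (1 - δ₀) ≤
      iid D m₀ {S | γ * (⨆ f ∈ F, corr D f) - ε₀ ≤ corr D (W (List.ofFn S))}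

/-- sign function, with `sign 0 = 1` -/
def rsign (x : ℝ) : ℝ := if 0 ≤ x then 1 else -1

/-- empirical `lam`-margin loss on a finite sample -/
def empLoss {m : ℕ} (S : Fin m → X × Bool) (lam : ℝ) (g : X → ℝ) : ℝ :=
  (∑ i, if bval (S i).2 * g (S i).1 ≤ lam then (1 : ℝ) else 0) / m

/-- truncation of `v` at level `γ` -/
def truncAt (γ : ℝ) (v : X → ℝ) : X → ℝ := fun x => max (-γ) (min γ (v x))

/-- `N` is an `ε`-cover of `G` in sup norm over the points `x` -/
def IsCover {k : ℕ} (x : Fin k → X) (G : Set (X → ℝ)) (ε : ℝ) (N : Set (X → ℝ)) : Prop :=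
  ∀ g ∈ G, ∃ g' ∈ N, ∀ i, |g (x i) - g' (x i)| ≤ ε

/-- minimal size of a finite `ε`-cover of `G` over the points `x` (∞ if none exists) -/
def covNum {k : ℕ} (x : Fin k → X) (G : Set (X → ℝ)) (ε : ℝ) : ℝ≥0∞ :=
  ⨅ (N : Finset (X → ℝ)) (_ : IsCover x G ε ↑N), (N.card : ℝ≥0∞)

end Agb

open Agb

section AuxStatement12

open Real MeasureTheory

-- helper: measure of a finset is the sum of singleton measures
lemma measure_finset_coe {α : Type*} [MeasurableSpace α] [MeasurableSingletonClass α]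
    (μ : Measure α) (t : Finset α) : μ ↑t = ∑ x ∈ t, μ {x} := by
  classical
  have hU : (↑t : Set α) = ⋃ x ∈ t, ({x} : Set α) := by ext y; simp
  rw [hU, measure_biUnion_finset ?_ (fun x _ => measurableSet_singleton x)]
  intro x _ y _ hxy
  exact Set.disjoint_singleton.2 hxy

lemma hoeffKernel (p s : ℝ) (hp0 : 0 ≤ p) (hp1 : p ≤ 1) :
    p * exp (s * (1 - p)) + (1 - p) * exp (-(s * p)) ≤ exp (s ^ 2 / 8) := by
  have hu : ∀ x : ℝ, 0 < p * exp x + (1 - p) := by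
    intro x
    rcases eq_or_lt_of_le hp0 with h | h
    · simp [← h]
    · have := mul_pos h (exp_pos x)
      have : (0:ℝ) ≤ 1 - p := by linarith
      nlinarith [mul_pos ‹0 < p› (exp_pos x)]
  set F : ℝ → ℝ := fun x => x ^ 2 / 8 + x * p - log (p * exp x + (1 - p)) with hFdef
  set F' : ℝ → ℝ := fun x => x / 4 + p - p * exp x / (p * exp x + (1 - p)) with hF'def
  have hF : ∀ x, HasDerivAt F (F' x) x := by
    intro x
    have h1 : HasDerivAt (fun x : ℝ => x ^ 2 / 8 + x * p) (2 * x ^ 1 / 8 + 1 * p) x :=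
      ((hasDerivAt_pow 2 x).div_const 8).add ((hasDerivAt_id x).mul_const p)
    have hud : HasDerivAt (fun x : ℝ => p * exp x + (1 - p)) (p * exp x) x :=
      ((Real.hasDerivAt_exp x).const_mul p).add_const (1 - p)
    have h2 : HasDerivAt (fun x : ℝ => log (p * exp x + (1 - p)))
        (p * exp x / (p * exp x + (1 - p))) x := hud.log (hu x).ne'
    have := h1.sub h2
    refine this.congr_deriv ?_
    simp only [hF'def]
    ring
  have hF' : ∀ x, HasDerivAt F'
      (1 / 4 - p * (1 - p) * exp x / (p * exp x + (1 - p)) ^ 2) x := by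
    intro x
    have h1 : HasDerivAt (fun x : ℝ => x / 4 + p) (1 / 4) x := by
      simpa using ((hasDerivAt_id x).div_const 4).add_const p
    have hud : HasDerivAt (fun x : ℝ => p * exp x + (1 - p)) (p * exp x) x :=
      ((Real.hasDerivAt_exp x).const_mul p).add_const (1 - p)
    have hnum : HasDerivAt (fun x : ℝ => p * exp x) (p * exp x) x :=
      (Real.hasDerivAt_exp x).const_mul p
    have h2 := hnum.div hud (hu x).ne'
    have := h1.sub h2
    refine this.congr_deriv ?_
    have h3 : (p * exp x + (1 - p)) ≠ 0 := (hu x).ne'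
    field_simp
    ring
  have hd2 : ∀ x : ℝ, 0 ≤ 1 / 4 - p * (1 - p) * exp x / (p * exp x + (1 - p)) ^ 2 := by
    intro x
    rw [sub_nonneg, div_le_iff₀ (pow_pos (hu x) 2)]
    nlinarith [sq_nonneg (p * exp x - (1 - p)), exp_pos x]
  have hF'mono : Monotone F' :=
    monotone_of_deriv_nonneg (fun x => (hF' x).differentiableAt)
      (fun x => by rw [(hF' x).deriv]; exact hd2 x)
  have hF'0 : F' 0 = 0 := by
    simp only [hF'def, Real.exp_zero, mul_one]
    field_simp
    ring
  have hF0 : F 0 = 0 := by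
    simp [hFdef, Real.exp_zero]
  have hFcont : Continuous F := by
    have : Differentiable ℝ F := fun x => (hF x).differentiableAt
    exact this.continuous
  have key : 0 ≤ F s := by
    rcases le_total 0 s with hs | hs
    · have hmono : MonotoneOn F (Set.Ici 0) := by
        apply monotoneOn_of_deriv_nonneg (convex_Ici 0) hFcont.continuousOn
          (fun x _ => (hF x).differentiableAt.differentiableWithinAt)
        intro x hx
        rw [(hF x).deriv]
        rw [interior_Ici] at hx
        have := hF'mono (le_of_lt hx)
        rw [hF'0] at this
        exact this
      have := hmono Set.self_mem_Ici (Set.mem_Ici.2 hs) hs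
      rwa [hF0] at this
    · have hanti : AntitoneOn F (Set.Iic 0) := by
        apply antitoneOn_of_deriv_nonpos (convex_Iic 0) hFcont.continuousOn
          (fun x _ => (hF x).differentiableAt.differentiableWithinAt)
        intro x hx
        rw [(hF x).deriv]
        rw [interior_Iic] at hx
        have := hF'mono (le_of_lt hx)
        rw [hF'0] at this
        exact this
      have := hanti (Set.mem_Iic.2 hs) Set.self_mem_Iic hs
      rwa [hF0] at this
  have hlog : log (p * exp s + (1 - p)) ≤ s ^ 2 / 8 + s * p := by
    have : 0 ≤ s ^ 2 / 8 + s * p - log (p * exp s + (1 - p)) := key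
    linarith
  have heq : p * exp (s * (1 - p)) + (1 - p) * exp (-(s * p))
      = exp (-(s * p)) * (p * exp s + (1 - p)) := by
    rw [show s * (1 - p) = s + -(s * p) by ring, Real.exp_add]
    ring
  rw [heq, ← Real.exp_log (hu s), ← Real.exp_add]
  apply Real.exp_le_exp.2
  linarith

lemma mgf_fin {α : Type*} [Fintype α] (w g : α → ℝ) (hw0 : ∀ z, 0 ≤ w z)
    (hw1 : ∑ z, w z = 1) (hg : ∀ z, g z = 1 ∨ g z = -1) (t : ℝ) :
    ∑ z, w z * exp (t * (g z - ∑ z, w z * g z)) ≤ exp (t ^ 2 / 2) := by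
  classical
  set μ := ∑ z, w z * g z with hμ
  set p := ∑ z ∈ Finset.univ.filter (fun z => g z = 1), w z with hp
  have hp0 : 0 ≤ p := Finset.sum_nonneg fun z _ => hw0 z
  have hp1 : p ≤ 1 := by
    rw [← hw1, hp]
    exact Finset.sum_le_sum_of_subset_of_nonneg (Finset.filter_subset _ _)
      (fun z _ _ => hw0 z)
  have hq : ∑ z ∈ Finset.univ.filter (fun z => ¬ g z = 1), w z = 1 - p := by
    have := Finset.sum_filter_add_sum_filter_not Finset.univ (fun z => g z = 1) w
    rw [hw1] at this
    linarith
  have hgneg : ∀ z ∈ Finset.univ.filter (fun z => ¬ g z = 1), g z = -1 := by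
    intro z hz
    rcases hg z with h | h
    · exact absurd h (Finset.mem_filter.1 hz).2
    · exact h
  have hμeq : μ = 2 * p - 1 := by
    rw [hμ, ← Finset.sum_filter_add_sum_filter_not Finset.univ (fun z => g z = 1) (fun z => w z * g z)]
    have e1 : ∑ z ∈ Finset.univ.filter (fun z => g z = 1), w z * g z = p := by
      rw [hp]
      exact Finset.sum_congr rfl fun z hz => by rw [(Finset.mem_filter.1 hz).2, mul_one]
    have e2 : ∑ z ∈ Finset.univ.filter (fun z => ¬ g z = 1), w z * g z = -(1 - p) := by
      rw [← hq, ← Finset.sum_neg_distrib]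
      exact Finset.sum_congr rfl fun z hz => by rw [hgneg z hz]; ring
    rw [e1, e2]; ring
  have hsplit : ∑ z, w z * exp (t * (g z - μ))
      = p * exp (t * (1 - μ)) + (1 - p) * exp (t * (-1 - μ)) := by
    rw [← Finset.sum_filter_add_sum_filter_not Finset.univ (fun z => g z = 1)
      (fun z => w z * exp (t * (g z - μ)))]
    have e1 : ∑ z ∈ Finset.univ.filter (fun z => g z = 1), w z * exp (t * (g z - μ))
        = p * exp (t * (1 - μ)) := by
      rw [hp, Finset.sum_mul]
      exact Finset.sum_congr rfl fun z hz => by rw [(Finset.mem_filter.1 hz).2]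
    have e2 : ∑ z ∈ Finset.univ.filter (fun z => ¬ g z = 1), w z * exp (t * (g z - μ))
        = (1 - p) * exp (t * (-1 - μ)) := by
      rw [← hq, Finset.sum_mul]
      exact Finset.sum_congr rfl fun z hz => by rw [hgneg z hz]
    rw [e1, e2]
  rw [hsplit]
  have h1 : t * (1 - μ) = (2 * t) * (1 - p) := by rw [hμeq]; ring
  have h2 : t * (-1 - μ) = -((2 * t) * p) := by rw [hμeq]; ring
  rw [h1, h2]
  have := hoeffKernel p (2 * t) hp0 hp1
  have h3 : (2 * t) ^ 2 / 8 = t ^ 2 / 2 := by ring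
  rwa [h3] at this

lemma chernoff_fin {α : Type*} [Fintype α] (w g : α → ℝ) (hw0 : ∀ z, 0 ≤ w z)
    (hw1 : ∑ z, w z = 1) (hg : ∀ z, g z = 1 ∨ g z = -1) {m : ℕ} (hm : 0 < m)
    {a : ℝ} (ha : 0 ≤ a) :
    ∑ S ∈ Finset.univ.filter
        (fun S : Fin m → α => a ≤ (∑ i, g (S i)) - m * ∑ z, w z * g z),
      ∏ i, w (S i) ≤ exp (-(a ^ 2) / (2 * m)) := by
  classical
  set μ := ∑ z, w z * g z with hμ
  have hm' : (0:ℝ) < m := by exact_mod_cast hm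
  set t := a / m with ht
  have ht0 : 0 ≤ t := div_nonneg ha hm'.le
  have h1 : ∑ S ∈ Finset.univ.filter
        (fun S : Fin m → α => a ≤ (∑ i, g (S i)) - m * μ), ∏ i, w (S i)
      ≤ ∑ S ∈ Finset.univ.filter
        (fun S : Fin m → α => a ≤ (∑ i, g (S i)) - m * μ),
          exp (t * ((∑ i, g (S i)) - m * μ - a)) * ∏ i, w (S i) := by
    apply Finset.sum_le_sum
    intro S hS
    have hmem := (Finset.mem_filter.1 hS).2
    have hexp : (1:ℝ) ≤ exp (t * ((∑ i, g (S i)) - m * μ - a)) := by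
      apply Real.one_le_exp
      have : 0 ≤ (∑ i, g (S i)) - m * μ - a := by linarith
      positivity
    have hw : 0 ≤ ∏ i, w (S i) := Finset.prod_nonneg fun i _ => hw0 (S i)
    nlinarith
  have h2 : ∑ S ∈ Finset.univ.filter
        (fun S : Fin m → α => a ≤ (∑ i, g (S i)) - m * μ),
          exp (t * ((∑ i, g (S i)) - m * μ - a)) * ∏ i, w (S i)
      ≤ ∑ S : Fin m → α, exp (t * ((∑ i, g (S i)) - m * μ - a)) * ∏ i, w (S i) := by
    apply Finset.sum_le_sum_of_subset_of_nonneg (Finset.filter_subset _ _)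
    intro S _ _
    have hw : 0 ≤ ∏ i, w (S i) := Finset.prod_nonneg fun i _ => hw0 (S i)
    positivity
  have hterm : ∀ S : Fin m → α, exp (t * ((∑ i, g (S i)) - m * μ - a)) * ∏ i, w (S i)
      = exp (-(t * a)) * ∏ i, (w (S i) * exp (t * (g (S i) - μ))) := by
    intro S
    have hsum : (∑ i : Fin m, t * (g (S i) - μ)) = t * ((∑ i, g (S i)) - m * μ) := by
      rw [← Finset.mul_sum, Finset.sum_sub_distrib, Finset.sum_const, Finset.card_univ,
        Fintype.card_fin, nsmul_eq_mul]
    have hexp : t * ((∑ i, g (S i)) - m * μ - a)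
        = (∑ i : Fin m, t * (g (S i) - μ)) + -(t * a) := by rw [hsum]; ring
    rw [hexp, Real.exp_add, Real.exp_sum, Finset.prod_mul_distrib]
    ring
  have h3 : ∑ S : Fin m → α, exp (t * ((∑ i, g (S i)) - m * μ - a)) * ∏ i, w (S i)
      = exp (-(t * a)) * (∑ z, w z * exp (t * (g z - μ))) ^ m := by
    simp only [hterm]
    rw [← Finset.mul_sum]
    congr 1
    have hpi := Finset.prod_univ_sum (fun _ : Fin m => (Finset.univ : Finset α))
      (fun _ z => w z * exp (t * (g z - μ)))
    rw [Fintype.piFinset_univ] at hpi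
    rw [← hpi, Finset.prod_const, Finset.card_univ, Fintype.card_fin]
  have h4 : (∑ z, w z * exp (t * (g z - μ))) ^ m ≤ exp (t ^ 2 / 2) ^ m := by
    apply pow_le_pow_left₀
    · exact Finset.sum_nonneg fun z _ => mul_nonneg (hw0 z) (exp_pos _).le
    · exact mgf_fin w g hw0 hw1 hg t
  have h5 : exp (-(t * a)) * exp (t ^ 2 / 2) ^ m = exp (-(a ^ 2) / (2 * m)) := by
    rw [← Real.exp_nat_mul, ← Real.exp_add]
    congr 1
    rw [ht]
    field_simp
    ring
  calc ∑ S ∈ Finset.univ.filter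
        (fun S : Fin m → α => a ≤ (∑ i, g (S i)) - m * μ), ∏ i, w (S i)
      ≤ ∑ S : Fin m → α, exp (t * ((∑ i, g (S i)) - m * μ - a)) * ∏ i, w (S i) :=
        h1.trans h2
    _ = exp (-(t * a)) * (∑ z, w z * exp (t * (g z - μ))) ^ m := h3
    _ ≤ exp (-(t * a)) * exp (t ^ 2 / 2) ^ m :=
        mul_le_mul_of_nonneg_left h4 (exp_pos _).le
    _ = exp (-(a ^ 2) / (2 * m)) := h5

def chi {r : ℕ} (a b : Fin r → Bool) : ℝ := ∏ i, (if a i && b i then (-1:ℝ) else 1)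

lemma chi_pm {r : ℕ} (a b : Fin r → Bool) : chi a b = 1 ∨ chi a b = -1 := by
  unfold chi
  apply Finset.prod_induction _ (fun x : ℝ => x = 1 ∨ x = -1)
  · rintro x y (hx | hx) (hy | hy) <;> rw [hx, hy] <;> norm_num
  · left; rfl
  · intro i _
    by_cases h : a i && b i <;> simp [h]

lemma chi_symm {r : ℕ} (a b : Fin r → Bool) : chi a b = chi b a := by
  unfold chi
  exact Finset.prod_congr rfl fun i _ => by rw [Bool.and_comm]

lemma chi_false {r : ℕ} (a : Fin r → Bool) : chi a (fun _ => false) = 1 := by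
  unfold chi; simp

lemma chi_orth {r : ℕ} (a a' : Fin r → Bool) :
    ∑ b, chi a b * chi a' b = if a = a' then ((2:ℝ) ^ r) else 0 := by
  classical
  have hterm : ∀ b : Fin r → Bool, chi a b * chi a' b
      = ∏ i, ((if a i && b i then (-1:ℝ) else 1) * (if a' i && b i then (-1:ℝ) else 1)) := by
    intro b; rw [chi, chi, ← Finset.prod_mul_distrib]
  simp only [hterm]
  have hpi := Finset.prod_univ_sum (fun _ : Fin r => (Finset.univ : Finset Bool))
    (fun i t => (if a i && t then (-1:ℝ) else 1) * (if a' i && t then (-1:ℝ) else 1))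
  rw [Fintype.piFinset_univ] at hpi
  rw [← hpi]
  have hfac : ∀ i, (∑ t : Bool, (if a i && t then (-1:ℝ) else 1) * (if a' i && t then (-1:ℝ) else 1))
      = if a i = a' i then 2 else 0 := by
    intro i
    rw [Fintype.sum_bool]
    cases ha : a i <;> cases ha' : a' i <;> norm_num
  simp only [hfac]
  by_cases h : a = a'
  · subst h
    simp [Finset.prod_const]
  · rw [if_neg h]
    obtain ⟨i, hi⟩ := Function.ne_iff.1 h
    exact Finset.prod_eq_zero (Finset.mem_univ i) (by simp [hi])

lemma chi_sq {r : ℕ} (a b : Fin r → Bool) : chi a b * chi a b = 1 := by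
  rcases chi_pm a b with h | h <;> rw [h] <;> norm_num

lemma chi_inj {r : ℕ} (a a' : Fin r → Bool) (h : ∀ b, chi a b = chi a' b) : a = a' := by
  by_contra hne
  have h1 := chi_orth a a'
  rw [if_neg hne] at h1
  have h2 : ∑ b, chi a b * chi a' b = (2:ℝ) ^ r := by
    have : ∀ b : Fin r → Bool, chi a b * chi a' b = 1 := by
      intro b; rw [h b]; exact chi_sq a' b
    simp only [this, Finset.sum_const, Finset.card_univ, nsmul_eq_mul, mul_one]
    simp [Fintype.card_fun]
  rw [h1] at h2
  have : (0:ℝ) < 2 ^ r := by positivity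
  linarith

lemma chi_parseval {r : ℕ} (v : (Fin r → Bool) → ℝ) :
    ∑ a, (∑ b, v b * chi a b) ^ 2 = (2:ℝ) ^ r * ∑ b, (v b) ^ 2 := by
  classical
  have hexp : ∀ a : Fin r → Bool, (∑ b, v b * chi a b) ^ 2
      = ∑ b, ∑ b', (v b * v b') * (chi a b * chi a b') := by
    intro a
    rw [sq, Finset.sum_mul_sum]
    exact Finset.sum_congr rfl fun b _ => Finset.sum_congr rfl fun b' _ => by ring
  simp only [hexp]
  rw [Finset.sum_comm]
  have hswap : ∀ b : Fin r → Bool,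
      ∑ a : Fin r → Bool, ∑ b', (v b * v b') * (chi a b * chi a b')
      = ∑ b', ∑ a : Fin r → Bool, (v b * v b') * (chi a b * chi a b') :=
    fun b => Finset.sum_comm
  simp only [hswap]
  have hinner : ∀ b b' : Fin r → Bool,
      ∑ a : Fin r → Bool, (v b * v b') * (chi a b * chi a b')
      = (v b * v b') * (if b = b' then ((2:ℝ) ^ r) else 0) := by
    intro b b'
    rw [← Finset.mul_sum]
    congr 1
    rw [← chi_orth b b']
    exact Finset.sum_congr rfl fun a _ => by rw [chi_symm a b, chi_symm a b']
  simp only [hinner]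
  have hdiag : ∀ b : Fin r → Bool,
      ∑ b', (v b * v b') * (if b = b' then ((2:ℝ) ^ r) else 0)
      = (v b) ^ 2 * (2:ℝ) ^ r := by
    intro b
    rw [Finset.sum_eq_single b]
    · rw [if_pos rfl]; ring
    · intro b' _ hb'
      rw [if_neg (fun h => hb' h.symm), mul_zero]
    · intro h; exact absurd (Finset.mem_univ b) h
  simp only [hdiag]
  rw [← Finset.sum_mul]
  ring

lemma had_exists {r : ℕ} (v : (Fin r → Bool) → ℝ) :
    ∃ a, ∑ b, |v b| ≤ Real.sqrt ((2:ℝ) ^ r) * |∑ b, v b * chi a b| := by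
  have hCS : (∑ b, |v b|) ^ 2 ≤ (2:ℝ) ^ r * ∑ b, (v b) ^ 2 := by
    have h := Finset.sum_mul_sq_le_sq_mul_sq Finset.univ (fun b => |v b|) (fun _ => (1:ℝ))
    simp only [mul_one, one_pow, sq_abs, Finset.sum_const, Finset.card_univ, nsmul_eq_mul] at h
    have hc : (Fintype.card (Fin r → Bool) : ℝ) = (2:ℝ) ^ r := by
      simp [Fintype.card_fun]
    rw [hc] at h
    calc (∑ b, |v b|) ^ 2 ≤ (∑ b, (v b) ^ 2) * ((2:ℝ) ^ r) := h
      _ = (2:ℝ) ^ r * ∑ b, (v b) ^ 2 := by ring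
  have hex : ∃ a : Fin r → Bool, ∑ b, (v b) ^ 2 ≤ (∑ b, v b * chi a b) ^ 2 := by
    have hsum : ∑ _a : Fin r → Bool, (∑ b, (v b) ^ 2)
        ≤ ∑ a : Fin r → Bool, (∑ b, v b * chi a b) ^ 2 := by
      rw [chi_parseval]
      rw [Finset.sum_const, Finset.card_univ, nsmul_eq_mul]
      have hc : (Fintype.card (Fin r → Bool) : ℝ) = (2:ℝ) ^ r := by
        simp [Fintype.card_fun]
      rw [hc]
    obtain ⟨a, -, ha⟩ := Finset.exists_le_of_sum_le Finset.univ_nonempty hsum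
    exact ⟨a, ha⟩
  obtain ⟨a, ha⟩ := hex
  refine ⟨a, ?_⟩
  have h1 : (∑ b, |v b|) ^ 2 ≤ (2:ℝ) ^ r * (∑ b, v b * chi a b) ^ 2 :=
    hCS.trans (mul_le_mul_of_nonneg_left ha (by positivity))
  calc ∑ b, |v b| = Real.sqrt ((∑ b, |v b|) ^ 2) :=
        (Real.sqrt_sq (Finset.sum_nonneg fun b _ => abs_nonneg _)).symm
    _ ≤ Real.sqrt ((2:ℝ) ^ r * (∑ b, v b * chi a b) ^ 2) := Real.sqrt_le_sqrt h1
    _ = Real.sqrt ((2:ℝ) ^ r) * |∑ b, v b * chi a b| := by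
        rw [Real.sqrt_mul (by positivity), Real.sqrt_sq_eq_abs]

lemma prob_bound {α : Type*} [Fintype α] [MeasurableSpace α] [MeasurableSingletonClass α]
    (D : Measure α) [IsProbabilityMeasure D] (m : ℕ) (hm : 0 < m)
    (g : α → ℝ) (hg : ∀ z, g z = 1 ∨ g z = -1) {a : ℝ} (ha : 0 ≤ a) :
    Measure.pi (fun _ : Fin m => D)
      {S | a ≤ (∑ i, g (S i)) - m * ∑ z, (D {z}).toReal * g z}
      ≤ ENNReal.ofReal (Real.exp (-(a ^ 2) / (2 * m))) := by
  classical
  set w : α → ℝ := fun z => (D {z}).toReal with hw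
  have hw0 : ∀ z, 0 ≤ w z := fun z => ENNReal.toReal_nonneg
  have hw1 : ∑ z, w z = 1 := by
    have h1 : D (↑(Finset.univ : Finset α)) = ∑ z, D {z} :=
      measure_finset_coe D Finset.univ
    rw [Finset.coe_univ, measure_univ] at h1
    have h2 := congrArg ENNReal.toReal h1
    rw [ENNReal.toReal_sum (fun z _ => measure_ne_top D _)] at h2
    · simpa [hw] using h2.symm
  have hA : {S : Fin m → α | a ≤ (∑ i, g (S i)) - m * ∑ z, (D {z}).toReal * g z}
      = ↑(Finset.univ.filter
        (fun S : Fin m → α => a ≤ (∑ i, g (S i)) - m * ∑ z, w z * g z)) := by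
    ext S; simp [hw]
  rw [hA, measure_finset_coe]
  have hsing : ∀ S : Fin m → α,
      Measure.pi (fun _ : Fin m => D) {S} = ENNReal.ofReal (∏ i, w (S i)) := by
    intro S
    rw [← Set.univ_pi_singleton S, Measure.pi_pi]
    rw [ENNReal.ofReal_prod_of_nonneg (fun i _ => hw0 (S i))]
    exact Finset.prod_congr rfl fun i _ => (ENNReal.ofReal_toReal (measure_ne_top D _)).symm
  calc ∑ S ∈ Finset.univ.filter
        (fun S : Fin m → α => a ≤ (∑ i, g (S i)) - m * ∑ z, w z * g z),
        Measure.pi (fun _ : Fin m => D) {S}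
      = ∑ S ∈ Finset.univ.filter
        (fun S : Fin m → α => a ≤ (∑ i, g (S i)) - m * ∑ z, w z * g z),
          ENNReal.ofReal (∏ i, w (S i)) :=
        Finset.sum_congr rfl fun S _ => hsing S
    _ = ENNReal.ofReal (∑ S ∈ Finset.univ.filter
        (fun S : Fin m → α => a ≤ (∑ i, g (S i)) - m * ∑ z, w z * g z),
          ∏ i, w (S i)) :=
        (ENNReal.ofReal_sum_of_nonneg (fun S _ =>
          Finset.prod_nonneg fun i _ => hw0 (S i))).symm
    _ ≤ ENNReal.ofReal (Real.exp (-(a ^ 2) / (2 * m))) :=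
        ENNReal.ofReal_le_ofReal (chernoff_fin w g hw0 hw1 hg hm ha)

end AuxStatement12

/-- construction of a hard instance: Lemma on the existence of a weak
learner from Hadamard vectors. For integers `n, s > 0` with `n` a power of `2` and
`ε₀, δ₀ ∈ (0,1]`, there exist a universe `X = [n·s]`, a base class `B ⊆ {±1}^X` with
`|B| = (2n)^s`, the reference class `F = {±1}^X` of all binary functions, and a
`(1/√n, ε₀, δ₀, m₀, F, B)` agnostic weak learner for every `m₀ ≥ ⌈8 ln(2|B|/δ₀)/ε₀²⌉`. -/


theorem statement12 (n s : ℕ) (hn : 0 < n) (hs : 0 < s) (hpow : ∃ r : ℕ, n = 2 ^ r)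
    (ε₀ δ₀ : ℝ) (hε₀0 : 0 < ε₀) (hε₀1 : ε₀ ≤ 1) (hδ₀0 : 0 < δ₀) (hδ₀1 : δ₀ ≤ 1) :
    ∃ B : Set (Fin (n * s) → ℝ),
      (∀ h ∈ B, IsBinary h) ∧ B.ncard = (2 * n) ^ s ∧
      ∀ m₀ : ℕ, ⌈8 * Real.log (2 * B.ncard / δ₀) / ε₀ ^ 2⌉₊ ≤ m₀ →
        ∃ W, IsAWL (1 / Real.sqrt n) ε₀ δ₀ m₀ {f | IsBinary f} B W := by
  classical
  obtain ⟨r, hr⟩ := hpow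
  have hnR : (n : ℝ) = (2:ℝ) ^ r := by rw [hr]; push_cast; ring
  have hE : Fintype.card (Fin s × (Fin r → Bool)) = Fintype.card (Fin (n * s)) := by
    simp [Fintype.card_fun, hr]; ring
  set E : Fin s × (Fin r → Bool) ≃ Fin (n * s) := Fintype.equivOfCardEq hE with hEdef
  set hfun : (Fin s → Bool × (Fin r → Bool)) → (Fin (n * s) → ℝ) :=
    fun c x => bval (c (E.symm x).1).1 * chi (c (E.symm x).1).2 (E.symm x).2 with hfdef
  have hfun_eval : ∀ c k b, hfun c (E (k, b)) = bval (c k).1 * chi (c k).2 b := by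
    intro c k b; simp [hfdef]
  have hbval_pm : ∀ y : Bool, bval y = 1 ∨ bval y = -1 := by
    intro y; cases y <;> simp [bval]
  have hbval_ne : ∀ y : Bool, bval y ≠ 0 := by
    intro y; rcases hbval_pm y with h | h <;> rw [h] <;> norm_num
  have hfun_bin : ∀ c, IsBinary (hfun c) := by
    intro c x
    rcases hbval_pm (c (E.symm x).1).1 with h | h <;>
      rcases chi_pm (c (E.symm x).1).2 (E.symm x).2 with h2 | h2 <;>
      rw [hfdef] <;> simp [h, h2]
  have hfun_inj : Function.Injective hfun := by
    intro c c' h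
    have h1 : ∀ k b, bval (c k).1 * chi (c k).2 b = bval (c' k).1 * chi (c' k).2 b := by
      intro k b; rw [← hfun_eval c k b, ← hfun_eval c' k b, h]
    funext k
    have hb1 : (c k).1 = (c' k).1 := by
      have h2 := h1 k (fun _ => false)
      rw [chi_false, chi_false, mul_one, mul_one] at h2
      cases hck : (c k).1 <;> cases hck' : (c' k).1
      · rfl
      · rw [hck, hck'] at h2; norm_num [bval] at h2
      · rw [hck, hck'] at h2; norm_num [bval] at h2
      · rfl
    have hb2 : (c k).2 = (c' k).2 := by
      apply chi_inj
      intro b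
      have h2 := h1 k b
      rw [hb1] at h2
      exact mul_left_cancel₀ (hbval_ne _) h2
    exact Prod.ext hb1 hb2
  have hBn : (Set.range hfun).ncard = Fintype.card (Fin s → Bool × (Fin r → Bool)) := by
    rw [← Nat.card_coe_set_eq, Nat.card_range_of_injective hfun_inj,
      Nat.card_eq_fintype_card]
  have hcardC : Fintype.card (Fin s → Bool × (Fin r → Bool)) = (2 * n) ^ s := by
    simp [Fintype.card_fun, Fintype.card_prod, hr]
  have hBcard : (Set.range hfun).ncard = (2 * n) ^ s := by rw [hBn, hcardC]
  refine ⟨Set.range hfun, ?_, hBcard, ?_⟩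
  · rintro h ⟨c, rfl⟩; exact hfun_bin c
  intro m₀ hm₀
  -- numeric facts
  set K : ℕ := (Set.range hfun).ncard with hK
  have hK1 : 1 ≤ K := by
    rw [hBcard]; exact Nat.one_le_pow _ _ (by omega)
  have hKR : (1:ℝ) ≤ (K:ℝ) := by exact_mod_cast hK1
  have hLpos : 0 < Real.log (2 * (K:ℝ) / δ₀) := by
    apply Real.log_pos
    rw [lt_div_iff₀ hδ₀0]
    linarith
  have hm₀R : 8 * Real.log (2 * (K:ℝ) / δ₀) / ε₀ ^ 2 ≤ (m₀:ℝ) := Nat.ceil_le.1 hm₀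
  have hm₀pos : 0 < m₀ := by
    have h1 : (0:ℝ) < 8 * Real.log (2 * (K:ℝ) / δ₀) / ε₀ ^ 2 := by positivity
    have := Nat.one_le_ceil_iff.2 h1
    omega
  have hm₀R' : (0:ℝ) < (m₀:ℝ) := by exact_mod_cast hm₀pos
  -- the learner
  set g : (Fin s → Bool × (Fin r → Bool)) → (Fin (n * s) × Bool) → ℝ :=
    fun c z => bval z.2 * hfun c z.1 with hgdef
  have hg_pm : ∀ c z, g c z = 1 ∨ g c z = -1 := by
    intro c z
    rcases hbval_pm z.2 with h | h <;> rcases hfun_bin c z.1 with h2 | h2 <;>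
      rw [hgdef] <;> simp [h, h2]
  set eZ : List (Fin (n * s) × Bool) → (Fin s → Bool × (Fin r → Bool)) → ℝ :=
    fun ℓ c => (ℓ.map (g c)).sum with heZ
  have hne : (Finset.univ : Finset (Fin s → Bool × (Fin r → Bool))).Nonempty :=
    Finset.univ_nonempty
  set pick : List (Fin (n * s) × Bool) → (Fin s → Bool × (Fin r → Bool)) :=
    fun ℓ => (Finset.exists_max_image Finset.univ (eZ ℓ) hne).choose with hpickdef
  have pickmax : ∀ ℓ c, eZ ℓ c ≤ eZ ℓ (pick ℓ) := fun ℓ c =>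
    (Finset.exists_max_image Finset.univ (eZ ℓ) hne).choose_spec.2 c (Finset.mem_univ c)
  refine ⟨fun ℓ => hfun (pick ℓ), fun S => ⟨pick S, rfl⟩, ?_⟩
  intro D hD
  haveI := hD
  haveI : IsProbabilityMeasure (iid D m₀) :=
    inferInstanceAs (IsProbabilityMeasure (Measure.pi fun _ : Fin m₀ => D))
  -- correlation as a finite sum
  set pm : Fin (n * s) × Bool → ℝ := fun z => (D {z}).toReal with hpmdef
  have hcorr : ∀ h : Fin (n * s) → ℝ,
      corr D h = ∑ z : Fin (n * s) × Bool, pm z * (bval z.2 * h z.1) := by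
    intro h
    rw [corr, integral_fintype (Integrable.of_finite)]
    exact Finset.sum_congr rfl fun z _ => by rw [smul_eq_mul]; rfl
  set v : Fin (n * s) → ℝ := fun x => pm (x, true) - pm (x, false) with hvdef
  have hvcorr : ∀ h : Fin (n * s) → ℝ, corr D h = ∑ x, v x * h x := by
    intro h
    rw [hcorr, Fintype.sum_prod_type]
    apply Finset.sum_congr rfl
    intro x _
    rw [Fintype.sum_bool]
    simp [bval, hvdef]
    ring
  have hsupnn : (0:ℝ) ≤ ∑ x, |v x| := Finset.sum_nonneg fun x _ => abs_nonneg _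
  have hsup : (⨆ f : Fin (n * s) → ℝ, ⨆ (_ : IsBinary f), corr D f) ≤ ∑ x, |v x| := by
    apply Real.iSup_le _ hsupnn
    intro f
    apply Real.iSup_le _ hsupnn
    intro hf
    rw [hvcorr f]
    apply Finset.sum_le_sum
    intro x _
    rcases hf x with h | h <;> rw [h]
    · rw [mul_one]; exact le_abs_self _
    · rw [mul_neg_one]; exact neg_le_abs _
  -- deterministic good hypothesis
  have hdetEx : ∀ k : Fin s, ∃ a, ∑ b, |v (E (k, b))|
      ≤ Real.sqrt ((2:ℝ) ^ r) * |∑ b, v (E (k, b)) * chi a b| :=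
    fun k => had_exists _
  choose A hA using hdetEx
  set T : Fin s → ℝ := fun k => ∑ b, v (E (k, b)) * chi (A k) b with hTdef
  set cstar : Fin s → Bool × (Fin r → Bool) :=
    fun k => (if 0 ≤ T k then true else false, A k) with hcstardef
  have hbvalT : ∀ k, bval (cstar k).1 * T k = |T k| := by
    intro k
    by_cases h : 0 ≤ T k
    · rw [hcstardef]; simp [h, bval, abs_of_nonneg h]
    · rw [hcstardef]; simp [h, bval]
      rw [abs_of_neg (lt_of_not_ge h)]
  have hcstar_corr : corr D (hfun cstar) = ∑ k, |T k| := by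
    rw [hvcorr, ← Equiv.sum_comp E (fun x => v x * hfun cstar x), Fintype.sum_prod_type]
    apply Finset.sum_congr rfl
    intro k _
    have : ∀ b, v (E (k, b)) * hfun cstar (E (k, b))
        = bval (cstar k).1 * (v (E (k, b)) * chi (A k) b) := by
      intro b
      rw [hfun_eval]
      have : (cstar k).2 = A k := by rw [hcstardef]
      rw [this]; ring
    rw [Finset.sum_congr rfl fun b _ => this b, ← Finset.mul_sum]
    exact hbvalT k
  have hsqrtpos : 0 < Real.sqrt (n:ℝ) := Real.sqrt_pos.2 (by exact_mod_cast hn)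
  have hgoodsum : ∑ x, |v x| ≤ Real.sqrt (n:ℝ) * corr D (hfun cstar) := by
    have hre : ∑ x, |v x| = ∑ k, ∑ b, |v (E (k, b))| := by
      rw [← Equiv.sum_comp E (fun x => |v x|), Fintype.sum_prod_type]
    rw [hre, hcstar_corr, Finset.mul_sum]
    apply Finset.sum_le_sum
    intro k _
    have := hA k
    rwa [← hnR] at this
  -- probability
  set μc : (Fin s → Bool × (Fin r → Bool)) → ℝ := fun c => ∑ z, pm z * g c z with hμcdef
  have hμcorr : ∀ c, corr D (hfun c) = μc c := by
    intro c
    rw [hcorr, hμcdef]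
  set Badp : (Fin s → Bool × (Fin r → Bool)) → Set (Fin m₀ → Fin (n * s) × Bool) :=
    fun c => {S | (m₀:ℝ) * ε₀ / 2 ≤ (∑ i, g c (S i)) - m₀ * ∑ z, pm z * g c z}
    with hBadp
  set Badm : (Fin s → Bool × (Fin r → Bool)) → Set (Fin m₀ → Fin (n * s) × Bool) :=
    fun c => {S | (m₀:ℝ) * ε₀ / 2 ≤ (∑ i, -g c (S i)) - m₀ * ∑ z, pm z * -g c z}
    with hBadm
  have ha0 : (0:ℝ) ≤ (m₀:ℝ) * ε₀ / 2 := by positivity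
  have harith : -(((m₀:ℝ) * ε₀ / 2) ^ 2) / (2 * m₀) = -((m₀:ℝ) * ε₀ ^ 2 / 8) := by
    field_simp
    ring
  set eB : ℝ := Real.exp (-((m₀:ℝ) * ε₀ ^ 2 / 8)) with heBdef
  have hPp : ∀ c, iid D m₀ (Badp c) ≤ ENNReal.ofReal eB := by
    intro c
    have := prob_bound D m₀ hm₀pos (g c) (hg_pm c) ha0
    rw [harith] at this
    exact this
  have hPm : ∀ c, iid D m₀ (Badm c) ≤ ENNReal.ofReal eB := by
    intro c
    have hgneg : ∀ z, -g c z = 1 ∨ -g c z = -1 := by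
      intro z; rcases hg_pm c z with h | h <;> rw [h] <;> norm_num
    have := prob_bound D m₀ hm₀pos (fun z => -g c z) hgneg ha0
    rw [harith] at this
    exact this
  set Bad : Set (Fin m₀ → Fin (n * s) × Bool) := ⋃ c, (Badp c ∪ Badm c) with hBaddef
  have hPBad : iid D m₀ Bad ≤ ENNReal.ofReal δ₀ := by
    have h1 : iid D m₀ Bad ≤ ∑ c, (iid D m₀ (Badp c) + iid D m₀ (Badm c)) := by
      refine (measure_iUnion_fintype_le _ _).trans ?_
      exact Finset.sum_le_sum fun c _ => measure_union_le _ _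
    have h2 : ∑ c : Fin s → Bool × (Fin r → Bool),
        (iid D m₀ (Badp c) + iid D m₀ (Badm c))
        ≤ ∑ _c : Fin s → Bool × (Fin r → Bool),
          (ENNReal.ofReal eB + ENNReal.ofReal eB) :=
      Finset.sum_le_sum fun c _ => add_le_add (hPp c) (hPm c)
    have h3 : ∑ _c : Fin s → Bool × (Fin r → Bool),
        (ENNReal.ofReal eB + ENNReal.ofReal eB)
        = ENNReal.ofReal ((K:ℝ) * (eB + eB)) := by
      rw [Finset.sum_const, Finset.card_univ, nsmul_eq_mul]
      rw [← ENNReal.ofReal_add (Real.exp_nonneg _) (Real.exp_nonneg _)]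
      rw [← ENNReal.ofReal_natCast, ← ENNReal.ofReal_mul (Nat.cast_nonneg _)]
      have hcast : ((Fintype.card (Fin s → Bool × (Fin r → Bool)) : ℕ) : ℝ) = (K:ℝ) := by
        exact_mod_cast hBn.symm
      rw [hcast]
    have h4 : (K:ℝ) * (eB + eB) ≤ δ₀ := by
      have hexp : eB ≤ Real.exp (-(Real.log (2 * (K:ℝ) / δ₀))) := by
        rw [heBdef]
        apply Real.exp_le_exp.2
        rw [neg_le_neg_iff]
        rw [div_le_iff₀ (by positivity : (0:ℝ) < ε₀ ^ 2)] at hm₀R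
        nlinarith
      have hek : Real.exp (-(Real.log (2 * (K:ℝ) / δ₀))) = δ₀ / (2 * (K:ℝ)) := by
        rw [Real.exp_neg, Real.exp_log (by positivity)]
        rw [inv_div]
      rw [hek] at hexp
      have hKpos : (0:ℝ) < (K:ℝ) := by linarith
      calc (K:ℝ) * (eB + eB) ≤ (K:ℝ) * (δ₀ / (2 * (K:ℝ)) + δ₀ / (2 * (K:ℝ))) := by
            apply mul_le_mul_of_nonneg_left _ hKpos.le
            exact add_le_add hexp hexp
        _ = δ₀ := by field_simp; ring
    calc iid D m₀ Bad ≤ ENNReal.ofReal ((K:ℝ) * (eB + eB)) := h1.trans (h2.trans_eq h3)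
      _ ≤ ENNReal.ofReal δ₀ := ENNReal.ofReal_le_ofReal h4
  have hBadMeas : MeasurableSet Bad := (Set.toFinite Bad).measurableSet
  have hcompl : ENNReal.ofReal (1 - δ₀) ≤ iid D m₀ Badᶜ := by
    rw [prob_compl_eq_one_sub hBadMeas]
    calc ENNReal.ofReal (1 - δ₀) = 1 - ENNReal.ofReal δ₀ := by
          rw [ENNReal.ofReal_sub _ hδ₀0.le, ENNReal.ofReal_one]
      _ ≤ 1 - iid D m₀ Bad := tsub_le_tsub_left hPBad 1
  refine le_trans hcompl (measure_mono ?_)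
  intro S hS
  simp only [Set.mem_setOf_eq]
  simp only [hBaddef, Set.mem_compl_iff, Set.mem_iUnion, Set.mem_union, not_exists,
    not_or] at hS
  -- extract deviation bounds
  have hdev : ∀ c, |(∑ i, g c (S i)) - m₀ * μc c| < (m₀:ℝ) * ε₀ / 2 := by
    intro c
    obtain ⟨hp, hm⟩ := hS c
    rw [hBadp] at hp
    rw [hBadm] at hm
    simp only [Set.mem_setOf_eq, not_le] at hp hm
    have hneg1 : (∑ i, -g c (S i)) = -(∑ i, g c (S i)) := by
      rw [Finset.sum_neg_distrib]
    have hneg2 : (∑ z, pm z * -g c z) = -(∑ z, pm z * g c z) := by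
      simp [mul_neg, Finset.sum_neg_distrib]
    rw [hneg1, hneg2] at hm
    have hμ : μc c = ∑ z, pm z * g c z := rfl
    rw [abs_lt, hμ]
    constructor <;> linarith
  have hZ : ∀ c, eZ (List.ofFn S) c = ∑ i, g c (S i) := by
    intro c
    rw [heZ]
    simp [List.map_ofFn, List.sum_ofFn, Function.comp]
  set chat := pick (List.ofFn S) with hchat
  have hZmax : (∑ i, g cstar (S i)) ≤ ∑ i, g chat (S i) := by
    rw [← hZ, ← hZ, hchat]
    exact pickmax _ _
  have hdev1 := hdev chat
  have hdev2 := hdev cstar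
  rw [abs_lt] at hdev1 hdev2
  have hfinal : μc cstar - ε₀ < μc chat := by
    have h1 : (m₀:ℝ) * μc chat > (∑ i, g chat (S i)) - (m₀:ℝ) * ε₀ / 2 := by linarith
    have h2 : (∑ i, g cstar (S i)) > (m₀:ℝ) * μc cstar - (m₀:ℝ) * ε₀ / 2 := by linarith
    have h3 : (m₀:ℝ) * μc chat > (m₀:ℝ) * μc cstar - (m₀:ℝ) * ε₀ := by linarith
    have h4 : (m₀:ℝ) * (μc cstar - ε₀) < (m₀:ℝ) * μc chat := by
      have h5 : (m₀:ℝ) * (μc cstar - ε₀) = (m₀:ℝ) * μc cstar - (m₀:ℝ) * ε₀ := by ring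
      linarith
    exact lt_of_mul_lt_mul_left h4 hm₀R'.le
  -- conclude
  rw [hμcorr chat]
  have hstep1 : 1 / Real.sqrt (n:ℝ) * (⨆ f : Fin (n * s) → ℝ, ⨆ (_ : IsBinary f), corr D f)
      ≤ 1 / Real.sqrt (n:ℝ) * ∑ x, |v x| := by
    apply mul_le_mul_of_nonneg_left hsup
    positivity
  have hstep2 : 1 / Real.sqrt (n:ℝ) * ∑ x, |v x| ≤ μc cstar := by
    rw [← hμcorr cstar]
    rw [div_mul_eq_mul_div, one_mul, div_le_iff₀ hsqrtpos]
    calc ∑ x, |v x| ≤ Real.sqrt (n:ℝ) * corr D (hfun cstar) := hgoodsum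
      _ = corr D (hfun cstar) * Real.sqrt (n:ℝ) := by ring
  linarith
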